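/- The determinant D_n = x_n y_{n+1} - x_{n+1} y_n equals h_0 (x_n x_{n+2} - x_{n+1}^2) for every n \geq 0. -/

import Mathlib

theorem stmt_2 (h : ℕ → ℝ) (hnn : ∀ k, 0 ≤ h k) (hsum : HasSum h 1)
    (h0 : 0 < h 0) (x y : ℕ → ℝ) (hx0 : x 0 = 1) (hx1 : x 1 = 0)
    (hy0 : y 0 = 0) (hy1 : y 1 = 1)
    (hxrec : ∀ n, 2 ≤ n →
      x n = (1 / h 0) * (x (n - 2) - ∑ i ∈ Finset.Icc 1 (n - 1), h (n - i) * x i))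
    (hyrec : ∀ n, 2 ≤ n →
      y n = (1 / h 0) * (y (n - 2) - ∑ i ∈ Finset.Icc 1 (n - 1), h (n - i) * y i))
    (D : ℕ → ℝ) (hD : ∀ n, D n = x n * y (n + 1) - x (n + 1) * y n) :
    ∀ n : ℕ, D n = h 0 * (x n * x (n + 2) - (x (n + 1)) ^ 2) := by
  have hne : h 0 ≠ 0 := ne_of_gt h0
  have key : ∀ n, y n = h 0 * x (n + 1) := by
    intro n
    induction n using Nat.strong_induction_on with
    | _ n ih =>
    match n with
    | 0 => simp [hy0, hx1]
    | 1 =>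
      have h2 := hxrec 2 (by norm_num)
      simp only [show (2:ℕ) - 2 = 0 from rfl, show (2:ℕ) - 1 = 1 from rfl,
        Finset.Icc_self, Finset.sum_singleton] at h2
      rw [hx1, hx0] at h2
      rw [hy1, h2]
      field_simp
      ring
    | (k+2) =>
      have hy := hyrec (k+2) (by omega)
      have hx := hxrec (k+3) (by omega)
      simp only [show k+2-2 = k from rfl, show k+2-1 = k+1 from rfl] at hy
      simp only [show k+3-2 = k+1 from rfl, show k+3-1 = k+2 from rfl] at hx
      rw [← Finset.Ico_add_one_right_eq_Icc, Finset.sum_Ico_eq_sum_range] at hy hx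
      simp only [show k+1+1-1 = k+1 from rfl, show k+2+1-1 = k+2 from rfl] at hy hx
      rw [Finset.sum_range_succ'] at hx
      have e0 : h (k+3-(1+0)) * x (1+0) = 0 := by
        rw [show (1+0 : ℕ) = 1 from rfl, hx1]; ring
      rw [e0, add_zero] at hx
      have hsx : ∑ j ∈ Finset.range (k+1), h (k+3-(1+(j+1))) * x (1+(j+1))
          = ∑ j ∈ Finset.range (k+1), h (k+1-j) * x (j+2) := by
        apply Finset.sum_congr rfl
        intro j hj
        have : k+3-(1+(j+1)) = k+1-j := by omega
        rw [this, show 1+(j+1) = j+2 by omega]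
      rw [hsx] at hx
      have hsy : ∑ j ∈ Finset.range (k+1), h (k+2-(1+j)) * y (1+j)
          = ∑ j ∈ Finset.range (k+1), h (k+1-j) * (h 0 * x (j+2)) := by
        apply Finset.sum_congr rfl
        intro j hj
        have hj' : j < k+1 := Finset.mem_range.mp hj
        have e1 : k+2-(1+j) = k+1-j := by omega
        have e2 : y (1+j) = h 0 * x (j+2) := by
          rw [show 1+j = j+1 by omega, ih (j+1) (by omega)]
        rw [e1, e2]
      rw [hsy, ih k (by omega)] at hy
      rw [hy, hx]
      have hf : ∑ j ∈ Finset.range (k+1), h (k+1-j) * (h 0 * x (j+2))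
          = h 0 * ∑ j ∈ Finset.range (k+1), h (k+1-j) * x (j+2) := by
        rw [Finset.mul_sum]; exact Finset.sum_congr rfl fun j _ => by ring
      rw [hf]
      field_simp
  intro n
  rw [hD, key n, key (n+1)]
  ring
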